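/- Let {P^k} be a sequence of symmetric positive definite d×d real matrices and let P̲ and P̄ be symmetric positive definite d×d matrices such that P̲ ⪯ P^k ⪯ P̄ (Loewner order) for all k. Let W ⊆ ℝ^d be nonempty. Suppose the sequence {w^k} ⊂ ℝ^d satisfies ‖w^{k+1} − w‖²_{P^{k+1}} ≤ ‖w^k − w‖²_{P^k} for every w ∈ W and every k, and suppose {w^k} has a cluster point w̄ ∈ W (i.e., some subsequence converges to w̄). Then the whole sequence w^k converges to w̄. -/

import Mathlib

open Filter Matrix

noncomputable section

lemma quad_cont {d : ℕ} (M : Matrix (Fin d) (Fin d) ℝ) :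
    Continuous fun x : Fin d → ℝ => x ⬝ᵥ M.mulVec x := by
  simp only [Matrix.mulVec, dotProduct]
  exact continuous_finset_sum _ fun i _ => (continuous_apply i).mul
    (continuous_finset_sum _ fun j _ => continuous_const.mul (continuous_apply j))

lemma psd_quad_nonneg {d : ℕ} {M : Matrix (Fin d) (Fin d) ℝ} (hM : M.PosSemidef)
    (x : Fin d → ℝ) : 0 ≤ x ⬝ᵥ M.mulVec x := by
  simpa using hM.re_dotProduct_nonneg x

lemma quad_smul {d : ℕ} (M : Matrix (Fin d) (Fin d) ℝ) (c : ℝ) (x : Fin d → ℝ) :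
    (c • x) ⬝ᵥ M.mulVec (c • x) = c ^ 2 * (x ⬝ᵥ M.mulVec x) := by
  rw [Matrix.mulVec_smul, smul_dotProduct, dotProduct_smul]
  simp only [smul_eq_mul]
  ring

lemma pd_quad_lower {d : ℕ} {M : Matrix (Fin d) (Fin d) ℝ} (hM : M.PosDef) :
    ∃ c > 0, ∀ x : Fin d → ℝ, c * ‖x‖ ^ 2 ≤ x ⬝ᵥ M.mulVec x := by
  rcases Nat.eq_zero_or_pos d with hd | hd
  · refine ⟨1, one_pos, fun x => ?_⟩
    subst hd
    have hx : x = 0 := Subsingleton.elim _ _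
    rw [hx]
    simp only [norm_zero, zero_dotProduct, Matrix.mulVec_zero]
    norm_num
  · have : Nontrivial (Fin d → ℝ) := by
      have : Nonempty (Fin d) := ⟨⟨0, hd⟩⟩
      infer_instance
    have hS : IsCompact (Metric.sphere (0 : Fin d → ℝ) 1) := isCompact_sphere _ _
    have hSne : (Metric.sphere (0 : Fin d → ℝ) 1).Nonempty :=
      NormedSpace.sphere_nonempty.2 zero_le_one
    obtain ⟨u, huS, hu⟩ := hS.exists_isMinOn hSne ((quad_cont M).continuousOn)
    have hune : u ≠ 0 := by
      intro h
      have := mem_sphere_zero_iff_norm.1 huS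
      simp [h] at this
    refine ⟨u ⬝ᵥ M.mulVec u, by simpa using hM.re_dotProduct_pos hune, fun x => ?_⟩
    rcases eq_or_ne x 0 with rfl | hx
    · simp
    · have hnx : ‖x‖ ≠ 0 := norm_ne_zero_iff.2 hx
      set v := ‖x‖⁻¹ • x with hv
      have hvS : v ∈ Metric.sphere (0 : Fin d → ℝ) 1 := by
        simp [hv, norm_smul, inv_mul_cancel₀ hnx]
      have h1 := hu hvS
      have h2 : v ⬝ᵥ M.mulVec v = ‖x‖⁻¹ ^ 2 * (x ⬝ᵥ M.mulVec x) := quad_smul M _ x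
      simp only [Set.mem_setOf_eq] at h1
      rw [h2] at h1
      have hpos : (0:ℝ) < ‖x‖ ^ 2 := by positivity
      calc (u ⬝ᵥ M.mulVec u) * ‖x‖ ^ 2 ≤ (‖x‖⁻¹ ^ 2 * (x ⬝ᵥ M.mulVec x)) * ‖x‖ ^ 2 := by
            nlinarith
        _ = x ⬝ᵥ M.mulVec x := by
            field_simp

theorem stmt3 {d : ℕ} (P : ℕ → Matrix (Fin d) (Fin d) ℝ)
    (Plow Pup : Matrix (Fin d) (Fin d) ℝ)
    (hPk : ∀ k, (P k).PosDef) (hlow : Plow.PosDef) (hup : Pup.PosDef)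
    (hlb : ∀ k, (P k - Plow).PosSemidef) (hub : ∀ k, (Pup - P k).PosSemidef)
    (W : Set (Fin d → ℝ)) (hW : W.Nonempty)
    (w : ℕ → Fin d → ℝ)
    (hmono : ∀ (k : ℕ), ∀ v ∈ W,
      (w (k + 1) - v) ⬝ᵥ ((P (k + 1)).mulVec (w (k + 1) - v))
        ≤ (w k - v) ⬝ᵥ ((P k).mulVec (w k - v)))
    (wbar : Fin d → ℝ) (hwbar : wbar ∈ W)
    (φ : ℕ → ℕ) (hφ : StrictMono φ)
    (hcluster : Tendsto (w ∘ φ) atTop (nhds wbar)) :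
    Tendsto w atTop (nhds wbar) := by
  set x : ℕ → Fin d → ℝ := fun k => w k - wbar with hx
  set a : ℕ → ℝ := fun k => x k ⬝ᵥ (P k).mulVec (x k) with ha
  have ha_anti : Antitone a :=
    antitone_nat_of_succ_le fun k => hmono k wbar hwbar
  have ha_nonneg : ∀ k, 0 ≤ a k := fun k => psd_quad_nonneg (hPk k).posSemidef _
  -- comparison with Plow and Pup quadratic forms
  have hlow_le : ∀ k, x k ⬝ᵥ Plow.mulVec (x k) ≤ a k := by
    intro k
    have := psd_quad_nonneg (hlb k) (x k)
    rw [Matrix.sub_mulVec, dotProduct_sub] at this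
    linarith
  have hle_up : ∀ k, a k ≤ x k ⬝ᵥ Pup.mulVec (x k) := by
    intro k
    have := psd_quad_nonneg (hub k) (x k)
    rw [Matrix.sub_mulVec, dotProduct_sub] at this
    linarith
  -- x ∘ φ → 0
  have hxφ : Tendsto (x ∘ φ) atTop (nhds 0) := by
    have : Tendsto (fun n => (w ∘ φ) n - wbar) atTop (nhds (wbar - wbar)) :=
      hcluster.sub tendsto_const_nhds
    simpa [hx, Function.comp_def] using this
  -- a ∘ φ → 0 by squeeze
  have haφ : Tendsto (a ∘ φ) atTop (nhds 0) := by
    have hup0 : Tendsto (fun n => (x ∘ φ) n ⬝ᵥ Pup.mulVec ((x ∘ φ) n)) atTop (nhds 0) := by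
      have := (quad_cont Pup).tendsto 0
      have h := this.comp hxφ
      simpa [Function.comp_def] using h
    refine squeeze_zero (fun n => ha_nonneg (φ n)) (fun n => hle_up (φ n)) hup0
  -- a converges (antitone, bounded below)
  have hbdd : BddBelow (Set.range a) := ⟨0, by rintro _ ⟨k, rfl⟩; exact ha_nonneg k⟩
  have haL : Tendsto a atTop (nhds (⨅ k, a k)) :=
    tendsto_atTop_ciInf ha_anti hbdd
  have haLφ : Tendsto (a ∘ φ) atTop (nhds (⨅ k, a k)) :=
    haL.comp (hφ.tendsto_atTop)
  have hL0 : (⨅ k, a k) = 0 := tendsto_nhds_unique haLφ haφ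
  have ha0 : Tendsto a atTop (nhds 0) := hL0 ▸ haL
  -- quadratic form Plow of x k → 0 by squeeze
  have hq0 : Tendsto (fun k => x k ⬝ᵥ Plow.mulVec (x k)) atTop (nhds 0) :=
    squeeze_zero (fun k => psd_quad_nonneg hlow.posSemidef _) hlow_le ha0
  -- norm squared → 0
  obtain ⟨c, hc, hcle⟩ := pd_quad_lower hlow
  have hn2 : Tendsto (fun k => ‖x k‖ ^ 2) atTop (nhds 0) := by
    have hbound : ∀ k, ‖x k‖ ^ 2 ≤ c⁻¹ * (x k ⬝ᵥ Plow.mulVec (x k)) := by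
      intro k
      rw [le_inv_mul_iff₀ hc]
      exact hcle (x k)
    have h0 : Tendsto (fun k => c⁻¹ * (x k ⬝ᵥ Plow.mulVec (x k))) atTop (nhds 0) := by
      simpa using hq0.const_mul c⁻¹
    exact squeeze_zero (fun k => by positivity) hbound h0
  have hn : Tendsto (fun k => ‖x k‖) atTop (nhds 0) := by
    have h := hn2.sqrt
    rw [Real.sqrt_zero] at h
    exact h.congr fun k => Real.sqrt_sq (norm_nonneg _)
  have hx0 : Tendsto x atTop (nhds 0) := tendsto_zero_iff_norm_tendsto_zero.2 hn
  have : Tendsto (fun k => x k + wbar) atTop (nhds (0 + wbar)) :=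
    hx0.add tendsto_const_nhds
  simpa [hx] using this

end
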